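/- Let A_1, …, A_k ∈ M_n be nonzero positive semidefinite matrices that are pairwise orthogonal with respect to the trace inner product (tr(A_i* A_j) = 0 for i ≠ j) and whose linear span contains the identity matrix I, and let B_1, …, B_k ∈ M_n be positive semidefinite matrices with tr(A_i) = tr(B_i) for every i. Then there exists a completely positive, entanglement breaking, trace-preserving linear map φ : M_n → M_n (an EBT map) such that φ(A_i) = B_i for every i ∈ {1, …, k}. -/

import Mathlib

open Matrix
open scoped ComplexOrder Kronecker

/-- The map `I_k ⊗ φ` acting on `k×k` block matrices with `n×n` blocks:
the `((i,r),(j,s))` entry of the output is the `(r,s)` entry of `φ` applied to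
the `(i,j)`-th block of `M`. -/
def blockMap {n : ℕ} (k : ℕ)
    (φ : Matrix (Fin n) (Fin n) ℂ → Matrix (Fin n) (Fin n) ℂ)
    (M : Matrix (Fin k × Fin n) (Fin k × Fin n) ℂ) :
    Matrix (Fin k × Fin n) (Fin k × Fin n) ℂ :=
  Matrix.of fun p q => φ (Matrix.of fun r s => M (p.1, r) (q.1, s)) p.2 q.2

/-- `φ : M_n → M_n` is completely positive if for every `k` the induced map on
`k×k` block matrices sends positive semidefinite matrices to positive
semidefinite matrices. -/
def IsCompletelyPositive {n : ℕ}
    (φ : Matrix (Fin n) (Fin n) ℂ → Matrix (Fin n) (Fin n) ℂ) : Prop :=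
  ∀ (k : ℕ) (M : Matrix (Fin k × Fin n) (Fin k × Fin n) ℂ),
    M.PosSemidef → (blockMap k φ M).PosSemidef

/-- `φ : M_n → M_n` is entanglement breaking if it admits a Kraus
representation `φ(X) = Σ_j V_j X V_j*` with every `V_j` of rank at most one. -/
def IsEntanglementBreaking {n : ℕ}
    (φ : Matrix (Fin n) (Fin n) ℂ → Matrix (Fin n) (Fin n) ℂ) : Prop :=
  ∃ (m : ℕ) (V : Fin m → Matrix (Fin n) (Fin n) ℂ),
    (∀ j, (V j).rank ≤ 1) ∧ ∀ X, φ X = ∑ j, V j * X * (V j)ᴴ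

/-- The Choi matrix of `φ : M_n → M_n`: the `n²×n²` block matrix whose
`(i,j)`-th `n×n` block is `φ (E i j)`. -/
def choiMatrix {n : ℕ}
    (φ : Matrix (Fin n) (Fin n) ℂ → Matrix (Fin n) (Fin n) ℂ) :
    Matrix (Fin n × Fin n) (Fin n × Fin n) ℂ :=
  Matrix.of fun p q => φ (Matrix.single p.1 q.1 1) p.2 q.2

/-! ### Auxiliary lemmas -/

lemma aux_rank_vecMulVec_le_one {n : ℕ} (w v : Fin n → ℂ) :
    (Matrix.vecMulVec w v).rank ≤ 1 := by
  rw [Matrix.vecMulVec_eq (Fin 1)]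
  exact le_trans (Matrix.rank_mul_le_left _ _)
    (le_trans (Matrix.rank_le_card_width _) (by simp))

lemma aux_smul_vecMulVec {n : ℕ} (α : ℂ) (w v : Fin n → ℂ) :
    α • Matrix.vecMulVec w v = Matrix.vecMulVec (α • w) v := by
  ext a b; simp [Matrix.vecMulVec_apply, mul_assoc]

/-- Rank-one decomposition of a positive semidefinite matrix. -/
lemma aux_psd_decomp {n : ℕ} {A : Matrix (Fin n) (Fin n) ℂ} (hA : A.PosSemidef) :
    ∃ u : Fin n → (Fin n → ℂ), A = ∑ r, Matrix.vecMulVec (u r) (star (u r)) := by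
  obtain ⟨C, hC⟩ : ∃ C : Matrix (Fin n) (Fin n) ℂ, A = Cᴴ * C := by
    open scoped MatrixOrder in exact CStarAlgebra.nonneg_iff_eq_star_mul_self.mp hA.nonneg
  refine ⟨fun r => star (C r), ?_⟩
  ext a b
  simp [hC, Matrix.mul_apply, Matrix.vecMulVec_apply, Matrix.sum_apply,
    Pi.star_apply, mul_comm]

lemma aux_trace_vecMulVec_mul {n : ℕ} (u : Fin n → ℂ) (X : Matrix (Fin n) (Fin n) ℂ) :
    (Matrix.vecMulVec u (star u) * X).trace = star u ⬝ᵥ (X *ᵥ u) := by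
  simp only [Matrix.trace, Matrix.diag_apply, Matrix.mul_apply, Matrix.vecMulVec_apply,
    dotProduct, Matrix.mulVec, Pi.star_apply]
  rw [Finset.sum_comm]
  refine Finset.sum_congr rfl fun b _ => ?_
  rw [Finset.mul_sum]
  refine Finset.sum_congr rfl fun a _ => ?_
  ring

lemma aux_key {n : ℕ} (u w : Fin n → ℂ) (X : Matrix (Fin n) (Fin n) ℂ) :
    Matrix.vecMulVec w (star u) * X * (Matrix.vecMulVec w (star u))ᴴ
      = (star u ⬝ᵥ (X *ᵥ u)) • Matrix.vecMulVec w (star w) := by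
  ext a b
  simp only [Matrix.mul_apply, Matrix.vecMulVec_apply, Matrix.conjTranspose_apply,
    Matrix.smul_apply, dotProduct, Matrix.mulVec, Pi.star_apply, smul_eq_mul,
    star_mul', star_star, Finset.sum_mul, Finset.mul_sum]
  rw [Finset.sum_comm]
  refine Finset.sum_congr rfl fun c _ => ?_
  refine Finset.sum_congr rfl fun d _ => ?_
  ring

lemma aux_psd_sum {N : Type*} [Fintype N] [DecidableEq N] {ι : Type*} (s : Finset ι)
    (f : ι → Matrix N N ℂ) (h : ∀ i ∈ s, (f i).PosSemidef) :
    (∑ i ∈ s, f i).PosSemidef :=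
  Finset.sum_induction f Matrix.PosSemidef
    (fun _ _ ha hb => ha.add hb) Matrix.PosSemidef.zero h

/-- A map given by a Kraus representation is completely positive. -/
lemma aux_cp_of_kraus {n : ℕ} (φ : Matrix (Fin n) (Fin n) ℂ → Matrix (Fin n) (Fin n) ℂ)
    {ι : Type*} [Fintype ι] (V : ι → Matrix (Fin n) (Fin n) ℂ)
    (h : ∀ X, φ X = ∑ j, V j * X * (V j)ᴴ) :
    IsCompletelyPositive φ := by
  intro k M hM
  classical
  set W : ι → Matrix (Fin k × Fin n) (Fin k × Fin n) ℂ :=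
    fun j => Matrix.of fun p q => (if p.1 = q.1 then 1 else 0) * V j p.2 q.2 with hW
  have hentry : blockMap k φ M = ∑ j, W j * M * (W j)ᴴ := by
    ext p q
    obtain ⟨p1, p2⟩ := p
    obtain ⟨q1, q2⟩ := q
    simp only [blockMap, Matrix.of_apply, h, Matrix.sum_apply, Matrix.mul_apply,
      Matrix.conjTranspose_apply, hW, Fintype.sum_prod_type, star_mul']
    refine Finset.sum_congr rfl fun j _ => ?_
    rw [Finset.sum_comm (γ := Fin k)]
    simp [Finset.sum_ite_eq, Finset.mul_sum, Finset.sum_mul, mul_comm, mul_assoc, mul_left_comm]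
  rw [hentry]
  exact aux_psd_sum _ _ fun j _ => hM.mul_mul_conjTranspose_same (W j)

/-- A nonzero PSD matrix has positive "norm" `tr(A²)`. -/
lemma aux_norm {n : ℕ} (A : Matrix (Fin n) (Fin n) ℂ) (hA : A.PosSemidef) (hne : A ≠ 0) :
    ∃ r : ℝ, 0 < r ∧ (A * A).trace = (r : ℂ) := by
  refine ⟨∑ p, ∑ q, Complex.normSq (A p q), ?_, ?_⟩
  · by_contra hle
    push_neg at hle
    have hnn : ∀ p ∈ Finset.univ, (0:ℝ) ≤ ∑ q, Complex.normSq (A p q) := by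
      intro p _; exact Finset.sum_nonneg fun q _ => Complex.normSq_nonneg _
    have h0 : ∑ p, ∑ q, Complex.normSq (A p q) = 0 :=
      le_antisymm hle (Finset.sum_nonneg hnn)
    apply hne
    ext p q
    have h1 := (Finset.sum_eq_zero_iff_of_nonneg hnn).mp h0 p (Finset.mem_univ p)
    have h2 := (Finset.sum_eq_zero_iff_of_nonneg (fun q _ => Complex.normSq_nonneg _)).mp h1 q
      (Finset.mem_univ q)
    simpa using Complex.normSq_eq_zero.mp h2
  · have herm := hA.isHermitian
    simp only [Matrix.trace, Matrix.diag_apply, Matrix.mul_apply]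
    push_cast
    refine Finset.sum_congr rfl fun p _ => Finset.sum_congr rfl fun q _ => ?_
    rw [show A q p = (starRingEnd ℂ) (A p q) from by
      conv_lhs => rw [← herm.eq]
      simp, ← Complex.mul_conj]

/-- Corollary: if the orthogonal inputs `A i` span a subspace containing the
identity and the traces match, there is an EBT map (completely positive,
entanglement breaking, trace-preserving) interpolating `A i ↦ B i`. -/
theorem interpolation_EBT_of_one_mem_span
    {n k : ℕ} (A B : Fin k → Matrix (Fin n) (Fin n) ℂ)
    (hApsd : ∀ i, (A i).PosSemidef) (hAne : ∀ i, A i ≠ 0)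
    (horth : ∀ i j, i ≠ j → ((A i)ᴴ * A j).trace = 0)
    (hspan : (1 : Matrix (Fin n) (Fin n) ℂ) ∈ Submodule.span ℂ (Set.range A))
    (hBpsd : ∀ i, (B i).PosSemidef)
    (htr : ∀ i, (A i).trace = (B i).trace) :
    ∃ φ : Matrix (Fin n) (Fin n) ℂ →ₗ[ℂ] Matrix (Fin n) (Fin n) ℂ,
      IsCompletelyPositive (⇑φ) ∧ IsEntanglementBreaking (⇑φ) ∧
      (∀ X : Matrix (Fin n) (Fin n) ℂ, (φ X).trace = X.trace) ∧
      ∀ i, φ (A i) = B i := by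
  classical
  choose u hu using fun i => aux_psd_decomp (hApsd i)
  choose w hw using fun i => aux_psd_decomp (hBpsd i)
  choose r hrpos hrtr using fun i => aux_norm (A i) (hApsd i) (hAne i)
  have hrne : ∀ i, (r i : ℂ) ≠ 0 := fun i => by
    exact_mod_cast (ne_of_gt (hrpos i))
  set t : Fin k → ℝ := fun i => Real.sqrt (r i) with ht
  have htsq : ∀ i, ((t i : ℂ))⁻¹ * ((t i : ℂ))⁻¹ = ((r i : ℂ))⁻¹ := by
    intro i
    rw [← mul_inv]
    congr 1
    rw [ht]
    push_cast
    exact_mod_cast Real.mul_self_sqrt (le_of_lt (hrpos i))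
  set V : (Fin k × Fin n × Fin n) → Matrix (Fin n) (Fin n) ℂ :=
    fun j => ((t j.1 : ℂ))⁻¹ • Matrix.vecMulVec (w j.1 j.2.2) (star (u j.1 j.2.1)) with hV
  set φ : Matrix (Fin n) (Fin n) ℂ →ₗ[ℂ] Matrix (Fin n) (Fin n) ℂ :=
    { toFun := fun X => ∑ j, V j * X * (V j)ᴴ
      map_add' := fun X Y => by
        simp [Matrix.mul_add, Matrix.add_mul, Finset.sum_add_distrib]
      map_smul' := fun c X => by
        simp [Matrix.mul_smul, Matrix.smul_mul, Finset.smul_sum] } with hφ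
  have hKraus : ∀ X, φ X = ∑ j, V j * X * (V j)ᴴ := fun X => rfl
  -- the master formula
  have master : ∀ X, φ X = ∑ i, (((r i : ℂ))⁻¹ * ((A i) * X).trace) • B i := by
    intro X
    rw [hKraus, Fintype.sum_prod_type]
    refine Finset.sum_congr rfl fun i _ => ?_
    have hterm : ∀ p : Fin n × Fin n,
        V (i, p) * X * (V (i, p))ᴴ
          = (((r i : ℂ))⁻¹ * (star (u i p.1) ⬝ᵥ (X *ᵥ u i p.1))) •
              Matrix.vecMulVec (w i p.2) (star (w i p.2)) := by
      intro p
      rw [hV]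
      simp only [Matrix.conjTranspose_smul, Matrix.smul_mul, Matrix.mul_smul, smul_smul]
      rw [aux_key]
      rw [show star ((t i : ℂ))⁻¹ = ((t i : ℂ))⁻¹ by
        simp [Complex.star_def, Complex.conj_ofReal]]
      rw [htsq i, smul_smul]
    have htrace : ((A i) * X).trace = ∑ p1 : Fin n, star (u i p1) ⬝ᵥ (X *ᵥ u i p1) := by
      conv_lhs => rw [hu i]
      rw [Finset.sum_mul, Matrix.trace_sum]
      exact Finset.sum_congr rfl fun p1 _ => aux_trace_vecMulVec_mul _ _
    rw [Fintype.sum_prod_type]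
    calc ∑ p1, ∑ p2, V (i, p1, p2) * X * (V (i, p1, p2))ᴴ
        = ∑ p1, ∑ p2, (((r i : ℂ))⁻¹ * (star (u i p1) ⬝ᵥ (X *ᵥ u i p1))) •
            Matrix.vecMulVec (w i p2) (star (w i p2)) := by
          exact Finset.sum_congr rfl fun p1 _ => Finset.sum_congr rfl fun p2 _ => hterm (p1, p2)
      _ = ∑ p1, (((r i : ℂ))⁻¹ * (star (u i p1) ⬝ᵥ (X *ᵥ u i p1))) • B i := by
          refine Finset.sum_congr rfl fun p1 _ => ?_
          rw [← Finset.smul_sum, ← hw i]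
      _ = (((r i : ℂ))⁻¹ * ((A i) * X).trace) • B i := by
          rw [← Finset.sum_smul, ← Finset.mul_sum, ← htrace]
  -- hermitian rewriting of orthogonality
  have horth' : ∀ i j, i ≠ j → ((A i) * A j).trace = 0 := by
    intro i j hij
    have := horth i j hij
    rwa [(hApsd i).isHermitian.eq] at this
  refine ⟨φ, ?_, ?_, ?_, ?_⟩
  · exact aux_cp_of_kraus _ V hKraus
  · refine ⟨Fintype.card (Fin k × Fin n × Fin n),
      V ∘ (Fintype.equivFin (Fin k × Fin n × Fin n)).symm, ?_, ?_⟩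
    · intro j
      simp only [Function.comp_apply, hV]
      rw [aux_smul_vecMulVec]
      exact aux_rank_vecMulVec_le_one _ _
    · intro X
      rw [hKraus]
      exact (Fintype.sum_equiv (Fintype.equivFin (Fin k × Fin n × Fin n)).symm _ _
        (fun j => rfl)).symm
  · -- trace preservation
    intro X
    obtain ⟨d, hd⟩ := (Submodule.mem_span_range_iff_exists_fun ℂ).mp hspan
    have hdj : ∀ j, d j * (r j : ℂ) = (A j).trace := by
      intro j
      have h1 : (A j).trace = ((A j) * (∑ i, d i • A i)).trace := by
        rw [hd, Matrix.mul_one]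
      rw [Matrix.mul_sum] at h1
      simp only [Matrix.mul_smul, Matrix.trace_sum, Matrix.trace_smul, smul_eq_mul] at h1
      rw [Finset.sum_eq_single j (fun i _ hij => by rw [horth' j i (Ne.symm hij), mul_zero])
        (fun h => absurd (Finset.mem_univ j) h)] at h1
      rw [h1, hrtr j]
    have hXtr : X.trace = ∑ i, d i * ((A i) * X).trace := by
      conv_lhs => rw [show X = (1 : Matrix (Fin n) (Fin n) ℂ) * X from (Matrix.one_mul X).symm,
        ← hd]
      rw [Finset.sum_mul, Matrix.trace_sum]
      exact Finset.sum_congr rfl fun i _ => by rw [Matrix.smul_mul, Matrix.trace_smul]; rfl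
    rw [master, Matrix.trace_sum, hXtr]
    refine Finset.sum_congr rfl fun i _ => ?_
    rw [Matrix.trace_smul, smul_eq_mul, ← htr i, ← hdj i]
    field_simp [hrne i]
  · -- interpolation
    intro i0
    rw [master]
    rw [Finset.sum_eq_single i0 (fun i _ hii0 => by
      rw [horth' i i0 hii0, mul_zero, zero_smul])
      (fun h => absurd (Finset.mem_univ i0) h)]
    rw [hrtr i0, inv_mul_cancel₀ (hrne i0), one_smul]
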